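/- arXiv:2009.08574 — 2 statements merged into one kernel-verified Lean document; each statement's English description precedes it below -/
import Mathlib

section
/- Let f : ℝ^d → ℝ be differentiable, L-smooth and μ-PL with global minimizer x* and f* = f(x*), and assume μ ≤ L. For each t ∈ ℕ, let φ^{(t)} : ℝ^d → ℝ^d be α_u^{(t)}-Lipschitz and α_l^{(t)}-coercive with 0 < α_l^{(t)} ≤ α_u^{(t)}. Let (w^{(t)}) satisfy the generalized mirror descent recursion φ^{(t)}(w^{(t+1)}) = φ^{(t)}(w^{(t)}) − η^{(t)} ∇f(w^{(t)}) with step sizes η^{(t)} = α_l^{(t)}/L. Then for every t, f(w^{(t+1)}) − f* ≤ (1 − μ (α_l^{(t)})²/(L (α_u^{(t)})²))(f(w^{(t)}) − f*); if moreover lim inf_{t→∞} α_l^{(t)} > 0 and lim sup_{t→∞} α_u^{(t)} < ∞, then f(w^{(t)}) → f* as t → ∞, and there exists c ∈ (0,1] with f(w^{(t)}) − f* ≤ (1 − c)^t (f(w^{(0)}) − f*) for all t. -/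
open InnerProductSpace

lemma descent_lemma {d : ℕ} (f : EuclideanSpace ℝ (Fin d) → ℝ) (L : ℝ) (hL : 0 < L)
    (hdiff : Differentiable ℝ f)
    (hsmooth : ∀ x y, ‖gradient f x - gradient f y‖ ≤ L * ‖x - y‖)
    (x y : EuclideanSpace ℝ (Fin d)) :
    f y ≤ f x + (inner ℝ (gradient f x) (y - x) : ℝ) + L / 2 * ‖y - x‖ ^ 2 := by
  set Δ := y - x with hΔ
  set A : ℝ := inner ℝ (gradient f x) Δ with hA
  set B : ℝ := ‖Δ‖ ^ 2 with hB
  set q : ℝ → ℝ := fun s => f (x + s • Δ) - s * A - L / 2 * s ^ 2 * B with hq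
  have hderiv : ∀ s : ℝ, HasDerivAt q
      ((inner ℝ (gradient f (x + s • Δ)) Δ : ℝ) - A - L / 2 * (2 * s) * B) s := by
    intro s
    have hline : HasDerivAt (fun s : ℝ => x + s • Δ) Δ s := by
      simpa using ((hasDerivAt_id s).smul_const Δ).const_add x
    have hfd : HasFDerivAt f (toDual ℝ _ (gradient f (x + s • Δ))) (x + s • Δ) :=
      ((hdiff (x + s • Δ)).hasGradientAt).hasFDerivAt
    have hc : HasDerivAt (fun s : ℝ => f (x + s • Δ))
        (toDual ℝ _ (gradient f (x + s • Δ)) Δ) s := hfd.comp_hasDerivAt s hline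
    rw [toDual_apply_apply] at hc
    have h2 : HasDerivAt (fun s : ℝ => s * A) A s := by
      simpa using (hasDerivAt_id s).mul_const A
    have h3 : HasDerivAt (fun s : ℝ => L / 2 * s ^ 2 * B) (L / 2 * (2 * s) * B) s := by
      have := ((hasDerivAt_pow 2 s).const_mul (L / 2)).mul_const B
      simpa [mul_comm, mul_assoc, mul_left_comm] using this
    exact (hc.sub h2).sub h3
  have hanti : AntitoneOn q (Set.Icc 0 1) := by
    apply antitoneOn_of_deriv_nonpos (convex_Icc 0 1)
    · exact Continuous.continuousOn
        (Differentiable.continuous (fun s => (hderiv s).differentiableAt))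
    · intro s _
      exact (hderiv s).differentiableAt.differentiableWithinAt
    · intro s hs
      rw [interior_Icc] at hs
      rw [(hderiv s).deriv]
      have hip : (inner ℝ (gradient f (x + s • Δ)) Δ : ℝ) - A
          = (inner ℝ (gradient f (x + s • Δ) - gradient f x) Δ : ℝ) := by
        rw [inner_sub_left]
      have hb1 : (inner ℝ (gradient f (x + s • Δ) - gradient f x) Δ : ℝ)
          ≤ ‖gradient f (x + s • Δ) - gradient f x‖ * ‖Δ‖ := real_inner_le_norm _ _
      have hb2 : ‖gradient f (x + s • Δ) - gradient f x‖ ≤ L * (s * ‖Δ‖) := by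
        have := hsmooth (x + s • Δ) x
        simpa [norm_smul, abs_of_pos hs.1] using this
      have hΔn : (0:ℝ) ≤ ‖Δ‖ := norm_nonneg _
      have hfin : L / 2 * (2 * s) * B = L * (s * ‖Δ‖) * ‖Δ‖ := by rw [hB]; ring
      linarith [hip, hb1, mul_le_mul_of_nonneg_right hb2 hΔn, hip.le, hip.ge, hfin.le, hfin.ge]
  have h01 := hanti (Set.left_mem_Icc.2 zero_le_one) (Set.right_mem_Icc.2 zero_le_one) zero_le_one
  simp only [hq] at h01
  have e0 : x + (0:ℝ) • Δ = x := by simp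
  have e1 : x + (1:ℝ) • Δ = y := by simp [hΔ]
  rw [e0, e1] at h01
  simp only [zero_mul, sub_zero, one_mul, one_pow, mul_one, ne_eq] at h01
  nlinarith [h01]
lemma gmd_step_alg (L μ a u E E' N G ip : ℝ) (hL : 0 < L) (ha : 0 < a) (hu : 0 < u)
    (hE : 0 ≤ E) (hG : 0 ≤ G)
    (h1 : ip ≤ -(L * N ^ 2)) (h2 : a * G ≤ L * u * N)
    (h3 : E' ≤ E + ip + L / 2 * N ^ 2) (h4 : μ * E ≤ 1 / 2 * G ^ 2) :
    E' ≤ (1 - μ * a ^ 2 / (L * u ^ 2)) * E := by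
  have hLu2 : 0 < L * u ^ 2 := mul_pos hL (pow_pos hu 2)
  have h2sq : (a * G) ^ 2 ≤ (L * u * N) ^ 2 :=
    pow_le_pow_left₀ (mul_nonneg ha.le hG) h2 2
  have h5 : E' ≤ E - L / 2 * N ^ 2 := by linarith
  have key : E' * (L * u ^ 2) ≤ (L * u ^ 2 - μ * a ^ 2) * E := by
    nlinarith [mul_le_mul_of_nonneg_right h5 hLu2.le, h2sq,
      mul_nonneg (sq_nonneg a) (by linarith : (0:ℝ) ≤ G ^ 2 - 2 * μ * E)]
  have hrw : (1 - μ * a ^ 2 / (L * u ^ 2)) * E = ((L * u ^ 2 - μ * a ^ 2) * E) / (L * u ^ 2) := by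
    have hL0 : L ≠ 0 := ne_of_gt hL
    have hu0 : u ≠ 0 := ne_of_gt hu
    rw [eq_div_iff (ne_of_gt hLu2)]; field_simp
  rw [hrw, le_div_iff₀ hLu2]
  exact key
/-- Generalized mirror descent with time-dependent mirrors `φ^{(t)}`
(each `α_u^{(t)}`-Lipschitz and `α_l^{(t)}`-coercive) and step sizes `η^{(t)} = α_l^{(t)}/L`
contracts the excess loss of an `L`-smooth, `μ`-PL function at each step by the factor
`1 - μ(α_l^{(t)})²/(L(α_u^{(t)})²)`; if in addition `lim inf α_l^{(t)} > 0` and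
`lim sup α_u^{(t)} < ∞` then `f(w^{(t)}) → f*` and the convergence is linear. -/
theorem gmd_time_dependent_linear_convergence {d : ℕ}
    (f : EuclideanSpace ℝ (Fin d) → ℝ) (L μ : ℝ)
    (hL : 0 < L) (hμ : 0 < μ) (hμL : μ ≤ L)
    (hdiff : Differentiable ℝ f)
    (hsmooth : ∀ x y, ‖gradient f x - gradient f y‖ ≤ L * ‖x - y‖)
    (xstar : EuclideanSpace ℝ (Fin d))
    (hmin : ∀ x, f xstar ≤ f x)
    (hPL : ∀ x, μ * (f x - f xstar) ≤ (1 / 2) * ‖gradient f x‖ ^ 2)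
    (φ : ℕ → EuclideanSpace ℝ (Fin d) → EuclideanSpace ℝ (Fin d))
    (αl αu : ℕ → ℝ)
    (hαl : ∀ t, 0 < αl t) (hαlu : ∀ t, αl t ≤ αu t)
    (hlip : ∀ t x y, ‖φ t x - φ t y‖ ≤ αu t * ‖x - y‖)
    (hcoer : ∀ t x y, αl t * ‖x - y‖ ^ 2 ≤ (inner ℝ (φ t x - φ t y) (x - y) : ℝ))
    (w : ℕ → EuclideanSpace ℝ (Fin d))
    (hstep : ∀ t, φ t (w (t + 1)) = φ t (w t) - (αl t / L) • gradient f (w t)) :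
    (∀ t, f (w (t + 1)) - f xstar ≤
        (1 - μ * (αl t) ^ 2 / (L * (αu t) ^ 2)) * (f (w t) - f xstar)) ∧
      ((∃ a > 0, ∀ᶠ t in Filter.atTop, a ≤ αl t) →
        (∃ M : ℝ, ∀ᶠ t in Filter.atTop, αu t ≤ M) →
        Filter.Tendsto (fun t => f (w t)) Filter.atTop (nhds (f xstar)) ∧
          ∃ c : ℝ, 0 < c ∧ c ≤ 1 ∧
            ∀ t, f (w t) - f xstar ≤ (1 - c) ^ t * (f (w 0) - f xstar)) := by
  have hau : ∀ s, 0 < αu s := fun s => lt_of_lt_of_le (hαl s) (hαlu s)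
  -- per-step contraction
  have hstep_main : ∀ t, f (w (t + 1)) - f xstar ≤
      (1 - μ * (αl t) ^ 2 / (L * (αu t) ^ 2)) * (f (w t) - f xstar) := by
    intro t
    have hφdiff : φ t (w (t + 1)) - φ t (w t) = -((αl t / L) • gradient f (w t)) := by
      rw [hstep t]; abel
    have haL : 0 < αl t / L := div_pos (hαl t) hL
    have h0 : αl t ≠ 0 := ne_of_gt (hαl t)
    have hL0 : L ≠ 0 := ne_of_gt hL
    -- coercivity bound
    have h1 : (inner ℝ (gradient f (w t)) (w (t + 1) - w t) : ℝ)
        ≤ -(L * ‖w (t + 1) - w t‖ ^ 2) := by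
      have hc := hcoer t (w (t + 1)) (w t)
      rw [hφdiff, inner_neg_left, real_inner_smul_left] at hc
      have h3 := mul_le_mul_of_nonneg_left hc (le_of_lt (div_pos hL (hαl t)))
      have e1 : L / αl t * (αl t * ‖w (t + 1) - w t‖ ^ 2) = L * ‖w (t + 1) - w t‖ ^ 2 := by
        field_simp
      have e2 : L / αl t * (αl t / L *
          (inner ℝ (gradient f (w t)) (w (t + 1) - w t) : ℝ))
          = (inner ℝ (gradient f (w t)) (w (t + 1) - w t) : ℝ) := by
        field_simp
      rw [e1, mul_neg, e2] at h3
      linarith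
    -- Lipschitz bound
    have h2 : αl t * ‖gradient f (w t)‖ ≤ L * αu t * ‖w (t + 1) - w t‖ := by
      have hl := hlip t (w (t + 1)) (w t)
      rw [hφdiff, norm_neg, norm_smul, Real.norm_eq_abs, abs_of_pos haL] at hl
      have h3 := mul_le_mul_of_nonneg_left hl hL.le
      have e1 : L * (αl t / L * ‖gradient f (w t)‖) = αl t * ‖gradient f (w t)‖ := by
        field_simp
      rw [e1] at h3
      linarith [h3]
    have h3 := descent_lemma f L hL hdiff hsmooth (w t) (w (t + 1))
    have hic : (inner ℝ (gradient f (w t)) (w (t + 1) - w t) : ℝ)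
        = (inner ℝ (w (t + 1) - w t) (gradient f (w t)) : ℝ) := real_inner_comm _ _
    exact gmd_step_alg L μ (αl t) (αu t) (f (w t) - f xstar) (f (w (t + 1)) - f xstar)
      ‖w (t + 1) - w t‖ ‖gradient f (w t)‖ _ hL (hαl t) (hau t)
      (sub_nonneg.2 (hmin _)) (norm_nonneg _) h1 h2 (by linarith [h3]) (by linarith [hPL (w t)])
  refine ⟨hstep_main, ?_⟩
  rintro ⟨aa, haa, hev_a⟩ ⟨M, hev_M⟩
  set ρ : ℕ → ℝ := fun s => μ * (αl s) ^ 2 / (L * (αu s) ^ 2) with hρdef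
  have hρpos : ∀ s, 0 < ρ s := fun s =>
    div_pos (mul_pos hμ (pow_pos (hαl s) 2)) (mul_pos hL (pow_pos (hau s) 2))
  have hρle1 : ∀ s, ρ s ≤ 1 := by
    intro s
    rw [hρdef, div_le_one (mul_pos hL (pow_pos (hau s) 2))]
    have h1 : (αl s) ^ 2 ≤ (αu s) ^ 2 := by nlinarith [hαl s, hαlu s]
    nlinarith [hμ.le, hαl s]
  obtain ⟨T₁, hT₁⟩ := Filter.eventually_atTop.1 hev_a
  obtain ⟨T₂, hT₂⟩ := Filter.eventually_atTop.1 hev_M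
  have hMpos : 0 < M := lt_of_lt_of_le haa
    (le_trans (hT₁ (max T₁ T₂) (le_max_left _ _))
      (le_trans (hαlu _) (hT₂ (max T₁ T₂) (le_max_right _ _))))
  have hc₀pos : 0 < μ * aa ^ 2 / (L * M ^ 2) :=
    div_pos (mul_pos hμ (pow_pos haa 2)) (mul_pos hL (pow_pos hMpos 2))
  set c : ℝ := min (μ * aa ^ 2 / (L * M ^ 2))
    ((Finset.range (max T₁ T₂ + 1)).inf' ⟨0, Finset.mem_range.2 (Nat.succ_pos _)⟩ ρ) with hc
  have hcρ : ∀ s, c ≤ ρ s := by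
    intro s
    rcases le_or_gt s (max T₁ T₂) with hs | hs
    · exact le_trans (min_le_right _ _)
        (Finset.inf'_le ρ (Finset.mem_range.2 (Nat.lt_succ_of_le hs)))
    · refine le_trans (min_le_left _ _) ?_
      have h1 : aa ≤ αl s := hT₁ s (le_trans (le_max_left _ _) hs.le)
      have h2 : αu s ≤ M := hT₂ s (le_trans (le_max_right _ _) hs.le)
      rw [hρdef]
      apply div_le_div₀ (mul_nonneg hμ.le (sq_nonneg _))
        (by nlinarith [mul_le_mul h1 h1 haa.le (le_trans haa.le h1), hμ.le] :
          μ * aa ^ 2 ≤ μ * αl s ^ 2)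
        (mul_pos hL (pow_pos (hau s) 2))
        (by nlinarith [mul_le_mul h2 h2 (hau s).le (le_trans (hau s).le h2), hL.le] :
          L * αu s ^ 2 ≤ L * M ^ 2)
  have hcpos : 0 < c := by
    apply lt_min hc₀pos
    refine (Finset.lt_inf'_iff _).2 ?_
    exact fun s _ => hρpos s
  have hcle1 : c ≤ 1 := le_trans (hcρ 0) (hρle1 0)
  have hgeom : ∀ t, f (w t) - f xstar ≤ (1 - c) ^ t * (f (w 0) - f xstar) := by
    intro t
    induction t with
    | zero => simp
    | succ t ih =>
      have hE : (0:ℝ) ≤ f (w t) - f xstar := sub_nonneg.2 (hmin _)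
      have h1 := hstep_main t
      have h2 : (1 - ρ t) * (f (w t) - f xstar) ≤ (1 - c) * (f (w t) - f xstar) :=
        mul_le_mul_of_nonneg_right (by linarith [hcρ t]) hE
      have h3 : (1 - c) * (f (w t) - f xstar) ≤ (1 - c) * ((1 - c) ^ t * (f (w 0) - f xstar)) :=
        mul_le_mul_of_nonneg_left ih (by linarith)
      calc f (w (t + 1)) - f xstar ≤ (1 - ρ t) * (f (w t) - f xstar) := h1
        _ ≤ (1 - c) * ((1 - c) ^ t * (f (w 0) - f xstar)) := le_trans h2 h3
        _ = (1 - c) ^ (t + 1) * (f (w 0) - f xstar) := by ring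
  refine ⟨?_, c, hcpos, hcle1, hgeom⟩
  have habs : |1 - c| < 1 := by rw [abs_lt]; constructor <;> linarith
  have hlim : Filter.Tendsto (fun t : ℕ => (1 - c) ^ t * (f (w 0) - f xstar))
      Filter.atTop (nhds 0) := by
    simpa using (tendsto_pow_atTop_nhds_zero_of_abs_lt_one habs).mul_const (f (w 0) - f xstar)
  have hsq : Filter.Tendsto (fun t => f (w t) - f xstar) Filter.atTop (nhds 0) :=
    squeeze_zero (fun t => sub_nonneg.2 (hmin _)) hgeom hlim
  have := hsq.add_const (f xstar)
  simpa using this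
end

section
/- Let φ : ℝ^d → ℝ^d be an α_u-Lipschitz and α_l-coercive map with 0 < α_l ≤ α_u, and let f : ℝ^d → ℝ be differentiable, nonnegative, and L-smooth, with μ ≤ L. Fix w^{(0)}, set R = 2√(2L)·√(f(w^{(0)}))·α_u²/(α_l μ), let B̃ = {x ∈ ℝ^d : ‖φ(x) − φ(w^{(0)})‖ ≤ R}, and assume f is μ-PL* on B̃. Let (w^{(t)}) satisfy the GMD recursion φ(w^{(t+1)}) = φ(w^{(t)}) − η ∇f(w^{(t)}) with η = α_l/L. Then every iterate remains in the dual ball and the loss contracts: for all t, ‖φ(w^{(t)}) − φ(w^{(0)})‖ ≤ R and f(w^{(t+1)}) ≤ (1 − μα_l²/(Lα_u²)) f(w^{(t)}). -/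
variable {F : Type*} [NormedAddCommGroup F] [InnerProductSpace ℝ F] [CompleteSpace F]

lemma gmd_lineDeriv (f : F → ℝ) (hdiff : Differentiable ℝ f) (x v : F) (t : ℝ) :
    HasDerivAt (fun s : ℝ => f (x + s • v)) (inner ℝ (gradient f (x + t • v)) v : ℝ) t := by
  have hc : HasDerivAt (fun s : ℝ => x + s • v) v t := by
    simpa using ((hasDerivAt_id t).smul_const v).const_add x
  have hf : HasFDerivAt f (InnerProductSpace.toDual ℝ F (gradient f (x + t • v))) (x + t • v) :=
    (hdiff (x + t • v)).hasGradientAt.hasFDerivAt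
  exact hf.comp_hasDerivAt t hc

lemma gmd_descent (f : F → ℝ) (L : ℝ) (hL : 0 ≤ L) (hdiff : Differentiable ℝ f)
    (hsmooth : ∀ x y, ‖gradient f x - gradient f y‖ ≤ L * ‖x - y‖) (x y : F) :
    f y ≤ f x + (inner ℝ (gradient f x) (y - x) : ℝ) + L / 2 * ‖y - x‖ ^ 2 := by
  set v := y - x with hv
  have hgradcont : Continuous (gradient f) := by
    have : LipschitzWith (Real.toNNReal L) (gradient f) := by
      apply LipschitzWith.of_dist_le_mul
      intro a b
      rw [dist_eq_norm, dist_eq_norm, Real.coe_toNNReal L hL]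
      exact hsmooth a b
    exact this.continuous
  have hcont : Continuous fun t : ℝ => (inner ℝ (gradient f (x + t • v)) v : ℝ) := by
    exact (hgradcont.comp (by continuity)).inner continuous_const
  have hftc : ∫ t in (0:ℝ)..1, (inner ℝ (gradient f (x + t • v)) v : ℝ) = f y - f x := by
    have := intervalIntegral.integral_eq_sub_of_hasDerivAt
      (f := fun s : ℝ => f (x + s • v))
      (fun t _ => gmd_lineDeriv f hdiff x v t) (hcont.intervalIntegrable 0 1)
    simpa [hv] using this
  have hcont2 : Continuous fun t : ℝ => (inner ℝ (gradient f x) v : ℝ) + L * ‖v‖ ^ 2 * t := by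
    continuity
  have hmono : ∫ t in (0:ℝ)..1, (inner ℝ (gradient f (x + t • v)) v : ℝ)
      ≤ ∫ t in (0:ℝ)..1, ((inner ℝ (gradient f x) v : ℝ) + L * ‖v‖ ^ 2 * t) := by
    apply intervalIntegral.integral_mono_on (by norm_num)
      (hcont.intervalIntegrable 0 1) (hcont2.intervalIntegrable 0 1)
    intro t ht
    have h1 : (inner ℝ (gradient f (x + t • v)) v : ℝ)
        = (inner ℝ (gradient f x) v : ℝ) + (inner ℝ (gradient f (x + t • v) - gradient f x) v : ℝ) := by
      rw [inner_sub_left]; ring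
    have h2 : (inner ℝ (gradient f (x + t • v) - gradient f x) v : ℝ)
        ≤ ‖gradient f (x + t • v) - gradient f x‖ * ‖v‖ := real_inner_le_norm _ _
    have h3 : ‖gradient f (x + t • v) - gradient f x‖ ≤ L * ‖t • v‖ := by
      simpa using hsmooth (x + t • v) x
    have h4 : ‖t • v‖ = t * ‖v‖ := by
      rw [norm_smul, Real.norm_eq_abs, abs_of_nonneg ht.1]
    rw [h4] at h3
    nlinarith [mul_le_mul_of_nonneg_right h3 (norm_nonneg v), norm_nonneg v]
  have hA : ∫ t in (0:ℝ)..1, ((inner ℝ (gradient f x) v : ℝ) + L * ‖v‖ ^ 2 * t)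
      = (inner ℝ (gradient f x) v : ℝ) + L / 2 * ‖v‖ ^ 2 := by
    have hmul : ∫ t in (0:ℝ)..1, L * ‖v‖ ^ 2 * t = L * ‖v‖ ^ 2 * (1 / 2) := by
      rw [intervalIntegral.integral_const_mul]
      norm_num [integral_id]
    rw [intervalIntegral.integral_add intervalIntegrable_const
      (Continuous.intervalIntegrable (by continuity : Continuous fun t : ℝ => L * ‖v‖ ^ 2 * t) 0 1), hmul]
    simp
    ring
  linarith [hftc ▸ hmono, hA ▸ hmono]

lemma gmd_grad_sq_le (f : F → ℝ) (L : ℝ) (hL : 0 < L) (hdiff : Differentiable ℝ f)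
    (hnonneg : ∀ x, 0 ≤ f x)
    (hsmooth : ∀ x y, ‖gradient f x - gradient f y‖ ≤ L * ‖x - y‖) (x : F) :
    ‖gradient f x‖ ^ 2 ≤ 2 * L * f x := by
  set g := gradient f x with hg
  have h := gmd_descent f L hL.le hdiff hsmooth x (x - L⁻¹ • g)
  have h1 : (x - L⁻¹ • g) - x = -(L⁻¹ • g) := by abel
  rw [h1] at h
  have h2 : (inner ℝ g (-(L⁻¹ • g)) : ℝ) = -(L⁻¹ * ‖g‖ ^ 2) := by
    rw [inner_neg_right, real_inner_smul_right, real_inner_self_eq_norm_sq]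
  have h3 : ‖-(L⁻¹ • g)‖ ^ 2 = L⁻¹ ^ 2 * ‖g‖ ^ 2 := by
    rw [norm_neg, norm_smul, Real.norm_eq_abs, abs_of_nonneg (inv_nonneg.2 hL.le), mul_pow]
  rw [h2, h3] at h
  have key : f x + -(L⁻¹ * ‖g‖ ^ 2) + L / 2 * (L⁻¹ ^ 2 * ‖g‖ ^ 2)
      = f x - ‖g‖ ^ 2 / (2 * L) := by
    field_simp
    ring
  have := hnonneg (x - L⁻¹ • g)
  rw [key] at h
  have h5 : ‖g‖ ^ 2 / (2 * L) ≤ f x := by linarith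
  calc ‖g‖ ^ 2 = ‖g‖ ^ 2 / (2 * L) * (2 * L) := by field_simp
    _ ≤ f x * (2 * L) := by apply mul_le_mul_of_nonneg_right h5; positivity
    _ = 2 * L * f x := by ring

set_option maxHeartbeats 1600000 in
/-- Under the hypotheses of the local convergence theorem for GMD
(`φ` `α_u`-Lipschitz and `α_l`-coercive, `f` nonnegative, `L`-smooth and `μ`-PL* on the
dual ball of radius `R = 2√(2L)√(f(w⁰))α_u²/(α_l μ)` around `φ(w⁰)`), the GMD iterates
with step size `η = α_l/L` remain in the dual ball and the loss contracts by the factor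
`1 - μα_l²/(Lα_u²)` at every step. -/
theorem gmd_iterates_stay_in_ball {d : ℕ}
    (φ : EuclideanSpace ℝ (Fin d) → EuclideanSpace ℝ (Fin d))
    (αl αu : ℝ) (hαl : 0 < αl) (hαlu : αl ≤ αu)
    (hlip : ∀ x y, ‖φ x - φ y‖ ≤ αu * ‖x - y‖)
    (hcoer : ∀ x y, αl * ‖x - y‖ ^ 2 ≤ (inner ℝ (φ x - φ y) (x - y) : ℝ))
    (f : EuclideanSpace ℝ (Fin d) → ℝ) (L μ : ℝ)
    (hL : 0 < L) (hμ : 0 < μ) (hμL : μ ≤ L)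
    (hdiff : Differentiable ℝ f)
    (hnonneg : ∀ x, 0 ≤ f x)
    (hsmooth : ∀ x y, ‖gradient f x - gradient f y‖ ≤ L * ‖x - y‖)
    (w : ℕ → EuclideanSpace ℝ (Fin d))
    (R : ℝ) (hR : R = 2 * Real.sqrt (2 * L) * Real.sqrt (f (w 0)) * αu ^ 2 / (αl * μ))
    (hPL : ∀ x ∈ {x : EuclideanSpace ℝ (Fin d) | ‖φ x - φ (w 0)‖ ≤ R},
      μ * f x ≤ (1 / 2) * ‖gradient f x‖ ^ 2)
    (hstep : ∀ t, φ (w (t + 1)) = φ (w t) - (αl / L) • gradient f (w t)) :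
    ∀ t, ‖φ (w t) - φ (w 0)‖ ≤ R ∧
      f (w (t + 1)) ≤ (1 - μ * αl ^ 2 / (L * αu ^ 2)) * f (w t) := by
  have hαu : 0 < αu := lt_of_lt_of_le hαl hαlu
  set η : ℝ := αl / L with hη
  have hηpos : 0 < η := div_pos hαl hL
  set c : ℝ := μ * αl ^ 2 / (L * αu ^ 2) with hc
  have hc0 : 0 < c := by positivity
  have hc1 : c ≤ 1 := by
    rw [hc, div_le_one (by positivity)]
    have h1 : αl ^ 2 ≤ αu ^ 2 := by nlinarith
    nlinarith
  set κ : ℝ := 1 - c with hκ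
  have hκ0 : 0 ≤ κ := by linarith
  have hκ1 : κ < 1 := by linarith
  set r : ℝ := Real.sqrt κ with hrdef
  have hr0 : 0 ≤ r := Real.sqrt_nonneg κ
  have hr1 : r < 1 := by
    have := Real.sqrt_lt_sqrt hκ0 hκ1
    rwa [Real.sqrt_one] at this
  have hrsq : r ^ 2 = κ := Real.sq_sqrt hκ0
  set C : ℝ := η * Real.sqrt (2 * L) * Real.sqrt (f (w 0)) with hC
  have hCnn : 0 ≤ C := by positivity
  -- norm of the step
  have hstepnorm : ∀ t, ‖φ (w (t + 1)) - φ (w t)‖ = η * ‖gradient f (w t)‖ := by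
    intro t
    rw [hstep t]
    rw [sub_sub_cancel_left, norm_neg, norm_smul, Real.norm_eq_abs, abs_of_pos hηpos]
  -- gradient bound  ‖∇f x‖² ≤ 2 L f x
  have hgradsq : ∀ x, ‖gradient f x‖ ^ 2 ≤ 2 * L * f x := fun x =>
    gmd_grad_sq_le f L hL hdiff hnonneg hsmooth x
  -- contraction step at any point of the ball
  have key : ∀ t, ‖φ (w t) - φ (w 0)‖ ≤ R → f (w (t + 1)) ≤ κ * f (w t) := by
    intro t hball
    have hPLt := hPL (w t) hball
    set G : ℝ := ‖gradient f (w t)‖ with hG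
    set D : ℝ := ‖w (t + 1) - w t‖ with hD
    have hdesc := gmd_descent f L hL.le hdiff hsmooth (w t) (w (t + 1))
    have hφsub : φ (w (t + 1)) - φ (w t) = -(η • gradient f (w t)) := by
      rw [hstep t]; abel
    -- coercivity
    have hcoer' := hcoer (w (t + 1)) (w t)
    rw [hφsub] at hcoer'
    have hinner : (inner ℝ (-(η • gradient f (w t))) (w (t + 1) - w t) : ℝ)
        = -(η * inner ℝ (gradient f (w t)) (w (t + 1) - w t)) := by
      rw [inner_neg_left, real_inner_smul_left]
    rw [hinner] at hcoer'
    -- so ⟪∇f(w t), Δ⟫ ≤ -L D²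
    have hip : (inner ℝ (gradient f (w t)) (w (t + 1) - w t) : ℝ) ≤ -(L * D ^ 2) := by
      have h1 : η * (inner ℝ (gradient f (w t)) (w (t + 1) - w t) : ℝ) ≤ -(αl * D ^ 2) := by
        linarith
      have h2 : αl = η * L := by rw [hη]; field_simp
      rw [h2] at h1
      have h3 : η * (inner ℝ (gradient f (w t)) (w (t + 1) - w t) : ℝ)
          ≤ η * (-(L * D ^ 2)) := by nlinarith [h1]
      exact le_of_mul_le_mul_left h3 hηpos
    -- descent gives f(w(t+1)) ≤ f(w t) - L/2 D²
    have hdec : f (w (t + 1)) ≤ f (w t) - L / 2 * D ^ 2 := by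
      have : ‖w (t + 1) - w t‖ = D := rfl
      nlinarith [hdesc, hip]
    -- Lipschitz: η G ≤ αu D
    have hlipt : η * G ≤ αu * D := by
      have := hlip (w (t + 1)) (w t)
      rw [hφsub, norm_neg, norm_smul, Real.norm_eq_abs, abs_of_pos hηpos] at this
      exact this
    have hGD : (η * G) ^ 2 ≤ (αu * D) ^ 2 := by
      apply pow_le_pow_left₀ (by positivity) hlipt
    have hηL : η * L = αl := by rw [hη]; field_simp
    have hN' : 2 * μ * f (w t) * αl ^ 2 ≤ αu ^ 2 * D ^ 2 * L ^ 2 := by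
      have hG2 : 2 * μ * f (w t) ≤ G ^ 2 := by linarith [hPLt]
      have hαl2 : αl ^ 2 = η ^ 2 * L ^ 2 := by rw [← hηL]; ring
      rw [hαl2]
      have e1 := mul_le_mul_of_nonneg_right hG2 (by positivity : (0:ℝ) ≤ η ^ 2 * L ^ 2)
      have e2 := mul_le_mul_of_nonneg_right hGD (sq_nonneg L)
      nlinarith [e1, e2]
    have hgoal : c * f (w t) ≤ L / 2 * D ^ 2 := by
      rw [hc, div_mul_eq_mul_div, div_le_iff₀ (by positivity)]
      nlinarith [hN']
    have hκf : κ * f (w t) = f (w t) - c * f (w t) := by rw [hκ]; ring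
    linarith [hdec, hgoal]
  -- geometric sum bound
  have hgs : ∀ n : ℕ, ∑ s ∈ Finset.range n, r ^ s ≤ 1 / (1 - r) := by
    intro n
    rw [le_div_iff₀ (by linarith)]
    have h2 : (∑ s ∈ Finset.range n, r ^ s) * (1 - r) = 1 - r ^ n := by
      linear_combination -(geom_sum_mul r n)
    rw [h2]
    linarith [pow_nonneg hr0 n]
  -- C / (1 - r) ≤ R
  have hCR : C * (1 / (1 - r)) ≤ R := by
    have hcsplit : c = (1 - r) * (1 + r) := by
      have : κ = r ^ 2 := hrsq.symm
      nlinarith [hrsq]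
    have h1r : 0 < 1 - r := by linarith
    have hfrac : 1 / (1 - r) ≤ 2 / c := by
      rw [div_le_div_iff₀ h1r hc0]
      nlinarith
    have h2 : C * (2 / c) = R := by
      rw [hC, hη, hc, hR]
      field_simp
    calc C * (1 / (1 - r)) ≤ C * (2 / c) := by
          apply mul_le_mul_of_nonneg_left hfrac hCnn
      _ = R := h2
  -- main induction
  have main : ∀ t, ‖φ (w t) - φ (w 0)‖ ≤ C * ∑ s ∈ Finset.range t, r ^ s ∧
      f (w t) ≤ κ ^ t * f (w 0) := by
    intro t
    induction t with
    | zero => simp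
    | succ t ih =>
      have hballt : ‖φ (w t) - φ (w 0)‖ ≤ R := by
        calc ‖φ (w t) - φ (w 0)‖ ≤ C * ∑ s ∈ Finset.range t, r ^ s := ih.1
          _ ≤ C * (1 / (1 - r)) := mul_le_mul_of_nonneg_left (hgs t) hCnn
          _ ≤ R := hCR
      constructor
      · -- ball bound at t+1
        have hGle : η * ‖gradient f (w t)‖ ≤ C * r ^ t := by
          have h1 : ‖gradient f (w t)‖ ^ 2 ≤ 2 * L * (κ ^ t * f (w 0)) := by
            have := hgradsq (w t)
            nlinarith [ih.2, hL]
          have h2 : ‖gradient f (w t)‖ ≤ Real.sqrt (2 * L) * Real.sqrt (f (w 0)) * r ^ t := by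
            have hrw : Real.sqrt (2 * L) * Real.sqrt (f (w 0)) * r ^ t
                = Real.sqrt (2 * L * (κ ^ t * f (w 0))) := by
              rw [Real.sqrt_mul (show (0:ℝ) ≤ 2 * L by positivity) (κ ^ t * f (w 0)),
                Real.sqrt_mul (pow_nonneg hκ0 t) (f (w 0))]
              have : Real.sqrt (κ ^ t) = r ^ t := by
                rw [show κ ^ t = (r ^ t) ^ 2 by rw [← hrsq]; ring,
                  Real.sqrt_sq (pow_nonneg hr0 t)]
              rw [this]; ring
            rw [hrw]
            calc ‖gradient f (w t)‖ = Real.sqrt (‖gradient f (w t)‖ ^ 2) :=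
                  (Real.sqrt_sq (norm_nonneg _)).symm
              _ ≤ Real.sqrt (2 * L * (κ ^ t * f (w 0))) := Real.sqrt_le_sqrt h1
          calc η * ‖gradient f (w t)‖
              ≤ η * (Real.sqrt (2 * L) * Real.sqrt (f (w 0)) * r ^ t) :=
                mul_le_mul_of_nonneg_left h2 hηpos.le
            _ = C * r ^ t := by rw [hC]; ring
        calc ‖φ (w (t + 1)) - φ (w 0)‖
            ≤ ‖φ (w (t + 1)) - φ (w t)‖ + ‖φ (w t) - φ (w 0)‖ :=
              norm_sub_le_norm_sub_add_norm_sub _ _ _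
          _ ≤ C * r ^ t + C * ∑ s ∈ Finset.range t, r ^ s := by
              rw [hstepnorm t]
              exact add_le_add hGle ih.1
          _ = C * ∑ s ∈ Finset.range (t + 1), r ^ s := by
              rw [Finset.sum_range_succ]; ring
      · -- contraction at t+1
        have := key t hballt
        calc f (w (t + 1)) ≤ κ * f (w t) := this
          _ ≤ κ * (κ ^ t * f (w 0)) := mul_le_mul_of_nonneg_left ih.2 hκ0
          _ = κ ^ (t + 1) * f (w 0) := by ring
  intro t
  have hballt : ‖φ (w t) - φ (w 0)‖ ≤ R := by
    calc ‖φ (w t) - φ (w 0)‖ ≤ C * ∑ s ∈ Finset.range t, r ^ s := (main t).1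
      _ ≤ C * (1 / (1 - r)) := mul_le_mul_of_nonneg_left (hgs t) hCnn
      _ ≤ R := hCR
  exact ⟨hballt, key t hballt⟩
end
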